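/- Let n ≥ 2, let k₁, k₂ ≥ 2, let λ₁, λ₂ be primitive k₁-th and k₂-th roots of unity, and let a_{1j} (2 ≤ j ≤ n) and a_{2j} (j = 1 or 3 ≤ j ≤ n) be complex numbers. Define the transversal pair of linear reflections β₁(x) = (λ₁x₁, x₂ + a_{12}x₁, x₃ + a_{13}x₁, …, xₙ + a_{1n}x₁) and β₂(x) = (x₁ + a_{21}x₂, λ₂x₂, x₃ + a_{23}x₂, …, xₙ + a_{2n}x₂). Assume β₁ and β₂ do not commute (equivalently (a_{12}, a_{21}) ≠ (0,0)) and that a_{12}a_{21} ≠ (λ₁ − 1)(λ₂ − 1). Then: if a_{21} = 0, the pair (β₁, β₂) is equivalent to (γ₁, γ₂) with γ₁(x) = (λ₁x₁, x₁ + x₂, x₃, …, xₙ) and γ₂(x) = (x₁, λ₂x₂, x₃, …, xₙ); and if a_{21} ≠ 0, the pair (β₁, β₂) is equivalent to (γ₁, γ₂) with γ₁(x) = (λ₁x₁, a_{12}a_{21}x₁ + x₂, x₃, …, xₙ) and γ₂(x) = (x₁ + x₂, λ₂x₂, x₃, …, xₙ). -/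

import Mathlib

noncomputable section

open Filter Function

/-- ℂⁿ as the space of functions `Fin n → ℂ`. -/
abbrev Cn (n : ℕ) : Type := Fin n → ℂ


def Pm (n : ℕ) (hn : 2 ≤ n) (s t : ℂ) (u v : Fin n → ℂ) : Cn n → Cn n :=
  fun x j => if j = (⟨0, by omega⟩ : Fin n) then s * x j
    else if j = (⟨1, by omega⟩ : Fin n) then t * x j
    else x j + u j * x ⟨0, by omega⟩ + v j * x ⟨1, by omega⟩

def Qm (n : ℕ) (hn : 2 ≤ n) (s t : ℂ) (u v : Fin n → ℂ) : Cn n → Cn n :=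
  fun y j => if j = (⟨0, by omega⟩ : Fin n) then s⁻¹ * y j
    else if j = (⟨1, by omega⟩ : Fin n) then t⁻¹ * y j
    else y j - u j * (s⁻¹ * y ⟨0, by omega⟩) - v j * (t⁻¹ * y ⟨1, by omega⟩)

lemma i01 (n : ℕ) (hn : 2 ≤ n) : (⟨0, by omega⟩ : Fin n) ≠ ⟨1, by omega⟩ := by
  simp [Fin.ext_iff]

def mkE (n : ℕ) (hn : 2 ≤ n) (s t : ℂ) (u v : Fin n → ℂ) (hs : s ≠ 0) (ht : t ≠ 0) :
    Cn n ≃ₗ[ℂ] Cn n where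
  toFun := Qm n hn s t u v
  map_add' x y := by
    funext j
    simp only [Qm, Pi.add_apply]
    split_ifs <;> ring
  map_smul' c x := by
    funext j
    simp only [Qm, Pi.smul_apply, smul_eq_mul, RingHom.id_apply]
    split_ifs <;> ring
  invFun := Pm n hn s t u v
  left_inv x := by
    have h01 := i01 n hn
    funext j
    by_cases h0 : j = (⟨0, by omega⟩ : Fin n)
    · subst h0
      simp only [Pm, Qm, if_neg h01, if_neg h01.symm, if_true, eq_self_iff_true]
      rw [← mul_assoc, mul_inv_cancel₀ hs, one_mul]
    by_cases h1 : j = (⟨1, by omega⟩ : Fin n)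
    · subst h1
      simp only [Pm, Qm, if_neg h01, if_neg h01.symm, if_true, eq_self_iff_true]
      rw [← mul_assoc, mul_inv_cancel₀ ht, one_mul]
    · simp only [Pm, Qm, if_neg h0, if_neg h1, if_neg h01.symm, if_neg h01, if_true,
        eq_self_iff_true]
      field_simp
      ring
  right_inv x := by
    have h01 := i01 n hn
    funext j
    by_cases h0 : j = (⟨0, by omega⟩ : Fin n)
    · subst h0
      simp only [Pm, Qm, if_neg h01, if_neg h01.symm, if_true, eq_self_iff_true]
      rw [← mul_assoc, inv_mul_cancel₀ hs, one_mul]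
    by_cases h1 : j = (⟨1, by omega⟩ : Fin n)
    · subst h1
      simp only [Pm, Qm, if_neg h01, if_neg h01.symm, if_true, eq_self_iff_true]
      rw [← mul_assoc, inv_mul_cancel₀ ht, one_mul]
    · simp only [Pm, Qm, if_neg h0, if_neg h1, if_neg h01.symm, if_neg h01, if_true,
        eq_self_iff_true]
      field_simp
      ring

lemma mkE_symm_apply (n : ℕ) (hn : 2 ≤ n) (s t : ℂ) (u v : Fin n → ℂ) (hs : s ≠ 0) (ht : t ≠ 0)
    (y : Cn n) : (mkE n hn s t u v hs ht).symm y = Pm n hn s t u v y := rfl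

/-- Theorem 4.19(i): normal forms for a non-commuting
transversal pair of linear reflections in pre-normal form with
a₁₂a₂₁ ≠ (λ₁−1)(λ₂−1). -/
theorem stmt_17 (n : ℕ) (hn : 2 ≤ n) (k₁ k₂ : ℕ) (hk₁ : 2 ≤ k₁) (hk₂ : 2 ≤ k₂)
    (lam₁ lam₂ : ℂ) (hl₁ : IsPrimitiveRoot lam₁ k₁) (hl₂ : IsPrimitiveRoot lam₂ k₂)
    (a₁ a₂ : Fin n → ℂ)
    (β₁ β₂ : Cn n → Cn n)
    (hβ₁ : β₁ = fun x : Cn n => fun j : Fin n =>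
      if j = (⟨0, by omega⟩ : Fin n) then lam₁ * x ⟨0, by omega⟩
      else x j + a₁ j * x ⟨0, by omega⟩)
    (hβ₂ : β₂ = fun x : Cn n => fun j : Fin n =>
      if j = (⟨1, by omega⟩ : Fin n) then lam₂ * x ⟨1, by omega⟩
      else x j + a₂ j * x ⟨1, by omega⟩)
    (hnc : β₁ ∘ β₂ ≠ β₂ ∘ β₁)
    (hne : a₁ ⟨1, by omega⟩ * a₂ ⟨0, by omega⟩ ≠ (lam₁ - 1) * (lam₂ - 1)) :
    (a₂ ⟨0, by omega⟩ = 0 →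
      ∃ h : Cn n ≃ₗ[ℂ] Cn n,
        (∀ x : Cn n, h (β₁ (h.symm x)) = fun j : Fin n =>
          if j = (⟨0, by omega⟩ : Fin n) then lam₁ * x ⟨0, by omega⟩
          else if j = (⟨1, by omega⟩ : Fin n) then x ⟨0, by omega⟩ + x ⟨1, by omega⟩
          else x j) ∧
        (∀ x : Cn n, h (β₂ (h.symm x)) = fun j : Fin n =>
          if j = (⟨1, by omega⟩ : Fin n) then lam₂ * x ⟨1, by omega⟩ else x j)) ∧
    (a₂ ⟨0, by omega⟩ ≠ 0 →
      ∃ h : Cn n ≃ₗ[ℂ] Cn n,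
        (∀ x : Cn n, h (β₁ (h.symm x)) = fun j : Fin n =>
          if j = (⟨0, by omega⟩ : Fin n) then lam₁ * x ⟨0, by omega⟩
          else if j = (⟨1, by omega⟩ : Fin n) then
            a₁ ⟨1, by omega⟩ * a₂ ⟨0, by omega⟩ * x ⟨0, by omega⟩ + x ⟨1, by omega⟩
          else x j) ∧
        (∀ x : Cn n, h (β₂ (h.symm x)) = fun j : Fin n =>
          if j = (⟨0, by omega⟩ : Fin n) then x ⟨0, by omega⟩ + x ⟨1, by omega⟩
          else if j = (⟨1, by omega⟩ : Fin n) then lam₂ * x ⟨1, by omega⟩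
          else x j)) := by
  have h01 : (⟨0, by omega⟩ : Fin n) ≠ (⟨1, by omega⟩ : Fin n) := i01 n hn
  have hlam1 : lam₁ - 1 ≠ 0 := sub_ne_zero.mpr (hl₁.ne_one (by omega))
  have hlam2 : lam₂ - 1 ≠ 0 := sub_ne_zero.mpr (hl₂.ne_one (by omega))
  have hAB : a₂ (⟨0, by omega⟩ : Fin n) = 0 → a₁ (⟨1, by omega⟩ : Fin n) ≠ 0 := by
    intro hB hA
    apply hnc
    funext x j
    simp only [hβ₁, hβ₂, Function.comp_apply]
    by_cases h0 : j = (⟨0, by omega⟩ : Fin n)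
    · subst h0
      simp [if_neg h01, if_neg h01.symm, hA, hB]
    by_cases h1 : j = (⟨1, by omega⟩ : Fin n)
    · subst h1
      simp [if_neg h01, if_neg h01.symm, hA, hB]
    · simp [if_neg h0, if_neg h1, if_neg h01, if_neg h01.symm, hA, hB]
      ring
  constructor
  · -- case a₂₀ = 0
    intro hB
    have hA : a₁ (⟨1, by omega⟩ : Fin n) ≠ 0 := hAB hB
    set A := a₁ (⟨1, by omega⟩ : Fin n) with hAdef
    set v : Fin n → ℂ := fun j => A * a₂ j / (lam₂ - 1) with hv
    set u : Fin n → ℂ := fun j => (a₁ j - v j) / (lam₁ - 1) with hu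
    refine ⟨mkE n hn 1 A u v one_ne_zero hA, fun x => ?_, fun x => ?_⟩
    · have key : β₁ (Pm n hn 1 A u v x) = Pm n hn 1 A u v (fun j : Fin n =>
          if j = (⟨0, by omega⟩ : Fin n) then lam₁ * x ⟨0, by omega⟩
          else if j = (⟨1, by omega⟩ : Fin n) then x ⟨0, by omega⟩ + x ⟨1, by omega⟩
          else x j) := by
        funext j
        simp only [hβ₁, Pm]
        by_cases h0 : j = (⟨0, by omega⟩ : Fin n)
        · subst h0
          simp [if_neg h01, if_neg h01.symm]
        by_cases h1 : j = (⟨1, by omega⟩ : Fin n)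
        · subst h1
          simp [if_neg h01, if_neg h01.symm]
          ring
        · simp only [if_neg h0, if_neg h1, if_neg h01, if_neg h01.symm, if_true,
            eq_self_iff_true]
          simp only [hu, hv]
          field_simp
          ring
      rw [mkE_symm_apply, key]
      exact (mkE n hn 1 A u v one_ne_zero hA).apply_symm_apply _
    · have key : β₂ (Pm n hn 1 A u v x) = Pm n hn 1 A u v (fun j : Fin n =>
          if j = (⟨1, by omega⟩ : Fin n) then lam₂ * x ⟨1, by omega⟩ else x j) := by
        funext j
        simp only [hβ₂, Pm]
        by_cases h0 : j = (⟨0, by omega⟩ : Fin n)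
        · subst h0
          simp [if_neg h01, if_neg h01.symm, hB]
        by_cases h1 : j = (⟨1, by omega⟩ : Fin n)
        · subst h1
          simp [if_neg h01, if_neg h01.symm]
          ring
        · simp only [if_neg h0, if_neg h1, if_neg h01, if_neg h01.symm, if_true,
            eq_self_iff_true]
          simp only [hu, hv]
          field_simp
          ring
      rw [mkE_symm_apply, key]
      exact (mkE n hn 1 A u v one_ne_zero hA).apply_symm_apply _
  · -- case a₂₀ ≠ 0
    intro hB
    set A := a₁ (⟨1, by omega⟩ : Fin n) with hAdef
    set B := a₂ (⟨0, by omega⟩ : Fin n) with hBdef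
    have hD : A * B - (lam₁ - 1) * (lam₂ - 1) ≠ 0 := sub_ne_zero.mpr hne
    set v : Fin n → ℂ := fun j =>
      (a₁ j * B - (lam₁ - 1) * a₂ j) / (A * B - (lam₁ - 1) * (lam₂ - 1)) with hv
    set u : Fin n → ℂ := fun j => a₂ j - (lam₂ - 1) * v j with hu
    refine ⟨mkE n hn B 1 u v hB one_ne_zero, fun x => ?_, fun x => ?_⟩
    · have key : β₁ (Pm n hn B 1 u v x) = Pm n hn B 1 u v (fun j : Fin n =>
          if j = (⟨0, by omega⟩ : Fin n) then lam₁ * x ⟨0, by omega⟩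
          else if j = (⟨1, by omega⟩ : Fin n) then A * B * x ⟨0, by omega⟩ + x ⟨1, by omega⟩
          else x j) := by
        funext j
        simp only [hβ₁, Pm]
        by_cases h0 : j = (⟨0, by omega⟩ : Fin n)
        · subst h0
          simp [if_neg h01, if_neg h01.symm]
          ring
        by_cases h1 : j = (⟨1, by omega⟩ : Fin n)
        · subst h1
          simp [if_neg h01, if_neg h01.symm]
          ring
        · simp only [if_neg h0, if_neg h1, if_neg h01, if_neg h01.symm, if_true,
            eq_self_iff_true]
          simp only [hu, hv]
          have hD' : B * A - (lam₂ - 1) * (lam₁ - 1) ≠ 0 := by rw [mul_comm B, mul_comm (lam₂ - 1)]; exact hD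
          field_simp
          ring
      rw [mkE_symm_apply, key]
      exact (mkE n hn B 1 u v hB one_ne_zero).apply_symm_apply _
    · have key : β₂ (Pm n hn B 1 u v x) = Pm n hn B 1 u v (fun j : Fin n =>
          if j = (⟨0, by omega⟩ : Fin n) then x ⟨0, by omega⟩ + x ⟨1, by omega⟩
          else if j = (⟨1, by omega⟩ : Fin n) then lam₂ * x ⟨1, by omega⟩
          else x j) := by
        funext j
        simp only [hβ₂, Pm]
        by_cases h0 : j = (⟨0, by omega⟩ : Fin n)
        · subst h0
          simp [if_neg h01, if_neg h01.symm]
          ring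
        by_cases h1 : j = (⟨1, by omega⟩ : Fin n)
        · subst h1
          simp [if_neg h01, if_neg h01.symm]
        · simp only [if_neg h0, if_neg h1, if_neg h01, if_neg h01.symm, if_true,
            eq_self_iff_true]
          simp only [hu, hv]
          field_simp
          ring
      rw [mkE_symm_apply, key]
      exact (mkE n hn B 1 u v hB one_ne_zero).apply_symm_apply _
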